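/- Let g, g̃ be continuous on [-1,1] and set F(x) = ∫_{-1}^1 e^{-|x-y|}(g(y) - g̃(y)) dy. Then the squared H^1 norm satisfies ∫_{-1}^1 (F(x)^2 + F'(x)^2) dx ≤ 16 (max_{y∈[-1,1]} |g(y) - g̃(y)|)^2. -/

import Mathlib

open Real MeasureTheory Set intervalIntegral

theorem stmt_16 (g gt : ℝ → ℝ)
    (hg : ContinuousOn g (Set.Icc (-1:ℝ) 1)) (hgt : ContinuousOn gt (Set.Icc (-1:ℝ) 1))
    (F : ℝ → ℝ)
    (hF : ∀ x, F x = ∫ y in (-1:ℝ)..1, Real.exp (-|x - y|) * (g y - gt y))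
    (M : ℝ) (hM : M = sSup ((fun y => |g y - gt y|) '' Set.Icc (-1:ℝ) 1)) :
    (∫ x in (-1:ℝ)..1, ((F x)^2 + (deriv F x)^2)) ≤ 16 * M^2 := by
  set h : ℝ → ℝ := fun y => g y - gt y with hh_def
  have hh : ContinuousOn h (Set.Icc (-1:ℝ) 1) := hg.sub hgt
  have hbdd : BddAbove ((fun y => |h y|) '' Set.Icc (-1:ℝ) 1) :=
    (isCompact_Icc.image_of_continuousOn (continuous_abs.comp_continuousOn hh)).bddAbove
  have hMb : ∀ y ∈ Set.Icc (-1:ℝ) 1, |h y| ≤ M := fun y hy => hM ▸ le_csSup hbdd ⟨y, hy, rfl⟩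
  have hM0 : 0 ≤ M := le_trans (abs_nonneg _) (hMb (-1) (by norm_num))
  set f1 : ℝ → ℝ := fun y => Real.exp y * h y with hf1_def
  set f2 : ℝ → ℝ := fun y => Real.exp (-y) * h y with hf2_def
  have hc1 : ContinuousOn f1 (Set.Icc (-1:ℝ) 1) := Real.continuous_exp.continuousOn.mul hh
  have hc2 : ContinuousOn f2 (Set.Icc (-1:ℝ) 1) :=
    (Real.continuous_exp.comp continuous_neg).continuousOn.mul hh
  have hIcc : Set.uIcc (-1:ℝ) 1 = Set.Icc (-1:ℝ) 1 := Set.uIcc_of_le (by norm_num)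
  have hsub : ∀ a b : ℝ, a ∈ Set.Icc (-1:ℝ) 1 → b ∈ Set.Icc (-1:ℝ) 1 →
      Set.uIcc a b ⊆ Set.Icc (-1:ℝ) 1 := by
    intro a b ha hb
    rw [← hIcc]
    exact Set.uIcc_subset_uIcc (hIcc ▸ ha) (hIcc ▸ hb)
  have hi1 : ∀ a b : ℝ, a ∈ Set.Icc (-1:ℝ) 1 → b ∈ Set.Icc (-1:ℝ) 1 →
      IntervalIntegrable f1 volume a b := fun a b ha hb =>
    (hc1.mono (hsub a b ha hb)).intervalIntegrable
  have hi2 : ∀ a b : ℝ, a ∈ Set.Icc (-1:ℝ) 1 → b ∈ Set.Icc (-1:ℝ) 1 →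
      IntervalIntegrable f2 volume a b := fun a b ha hb =>
    (hc2.mono (hsub a b ha hb)).intervalIntegrable
  set A : ℝ → ℝ := fun x => ∫ y in (-1:ℝ)..x, f1 y with hA_def
  set B : ℝ → ℝ := fun x => ∫ y in x..(1:ℝ), f2 y with hB_def
  set G : ℝ → ℝ := fun x => Real.exp (-x) * A x + Real.exp x * B x with hG_def
  set D : ℝ → ℝ := fun x => -(Real.exp (-x) * A x) + Real.exp x * B x with hD_def
  -- Step 1 : F = G on Icc
  have hFG : ∀ x ∈ Set.Icc (-1:ℝ) 1, F x = G x := by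
    intro x hx
    have hx1 : (-1:ℝ) ≤ x := hx.1
    have hx2 : x ≤ 1 := hx.2
    have hk : ∀ a b : ℝ, a ∈ Set.Icc (-1:ℝ) 1 → b ∈ Set.Icc (-1:ℝ) 1 →
        IntervalIntegrable (fun y => Real.exp (-|x - y|) * h y) volume a b := by
      intro a b ha hb
      refine ContinuousOn.intervalIntegrable ?_
      exact ((Real.continuous_exp.comp
        (continuous_abs.comp (continuous_const.sub continuous_id)).neg).continuousOn.mul
        (hh.mono (hsub a b ha hb)))
    have hsplit : (∫ y in (-1:ℝ)..1, Real.exp (-|x - y|) * h y)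
        = (∫ y in (-1:ℝ)..x, Real.exp (-|x - y|) * h y)
          + ∫ y in x..(1:ℝ), Real.exp (-|x - y|) * h y :=
      (integral_add_adjacent_intervals (hk _ _ (by norm_num) hx) (hk _ _ hx (by norm_num))).symm
    have h1 : (∫ y in (-1:ℝ)..x, Real.exp (-|x - y|) * h y) = Real.exp (-x) * A x := by
      rw [hA_def]
      rw [← intervalIntegral.integral_const_mul]
      refine intervalIntegral.integral_congr ?_
      intro y hy
      have hy' : y ≤ x := by
        rw [Set.uIcc_of_le hx1] at hy
        exact hy.2
      show Real.exp (-|x - y|) * h y = Real.exp (-x) * f1 y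
      rw [abs_of_nonneg (by linarith : (0:ℝ) ≤ x - y), hf1_def]
      rw [show -(x - y) = -x + y by ring, Real.exp_add]
      ring
    have h2 : (∫ y in x..(1:ℝ), Real.exp (-|x - y|) * h y) = Real.exp x * B x := by
      rw [hB_def]
      rw [← intervalIntegral.integral_const_mul]
      refine intervalIntegral.integral_congr ?_
      intro y hy
      have hy' : x ≤ y := by
        rw [Set.uIcc_of_le hx2] at hy
        exact hy.1
      show Real.exp (-|x - y|) * h y = Real.exp x * f2 y
      have habs : |x - y| = y - x := by rw [abs_sub_comm]; exact abs_of_nonneg (by linarith)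
      rw [habs, hf2_def]
      rw [show -(y - x) = x + -y by ring, Real.exp_add]
      ring
    rw [hF, hsplit, h1, h2, hG_def]
  -- Step 2 : deriv F = D on Ioo
  have hderiv : ∀ x ∈ Set.Ioo (-1:ℝ) 1, deriv F x = D x := by
    intro x hx
    have hxI : x ∈ Set.Icc (-1:ℝ) 1 := Set.Ioo_subset_Icc_self hx
    have hmem : Set.Ioo (-1:ℝ) 1 ∈ nhds x := isOpen_Ioo.mem_nhds hx
    have hFGn : F =ᶠ[nhds x] G :=
      Filter.eventuallyEq_of_mem hmem fun y hy => hFG y (Set.Ioo_subset_Icc_self hy)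
    rw [hFGn.deriv_eq]
    have hnhds : Set.Icc (-1:ℝ) 1 ∈ nhds x := Icc_mem_nhds hx.1 hx.2
    have hA' : HasDerivAt A (f1 x) x := by
      refine intervalIntegral.integral_hasDerivAt_right (hi1 _ _ (by norm_num) hxI)
        ?_ ((hc1 x hxI).continuousAt hnhds)
      exact (hc1.mono Set.Ioo_subset_Icc_self).stronglyMeasurableAtFilter isOpen_Ioo x hx
    have hC' : HasDerivAt (fun x => ∫ y in (1:ℝ)..x, f2 y) (f2 x) x := by
      refine intervalIntegral.integral_hasDerivAt_right (hi2 _ _ (by norm_num) hxI)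
        ?_ ((hc2 x hxI).continuousAt hnhds)
      exact (hc2.mono Set.Ioo_subset_Icc_self).stronglyMeasurableAtFilter isOpen_Ioo x hx
    have hBeq : B = fun x => -(∫ y in (1:ℝ)..x, f2 y) := by
      funext z
      rw [hB_def, intervalIntegral.integral_symm, neg_neg]
    have hB' : HasDerivAt B (-(f2 x)) x := by
      rw [hBeq]; exact hC'.neg
    have hen : HasDerivAt (fun x : ℝ => Real.exp (-x)) (-Real.exp (-x)) x := by
      simpa using (hasDerivAt_neg x).exp
    have hG' : HasDerivAt G ((-Real.exp (-x)) * A x + Real.exp (-x) * f1 x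
        + (Real.exp x * B x + Real.exp x * (-(f2 x)))) x :=
      (hen.mul hA').add ((Real.hasDerivAt_exp x).mul hB')
    rw [hG'.deriv, hD_def, hf1_def, hf2_def]
    ring
  -- Step 3 : continuity of A, B, G, D on Icc
  have hAcont : ContinuousOn A (Set.Icc (-1:ℝ) 1) := by
    have := intervalIntegral.continuousOn_primitive_interval (μ := volume) (a := (-1:ℝ))
      (b := (1:ℝ)) (f := f1) (by rw [hIcc]; exact hc1.integrableOn_Icc)
    rwa [hIcc] at this
  have hBcont : ContinuousOn B (Set.Icc (-1:ℝ) 1) := by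
    have hIcc' : Set.uIcc (1:ℝ) (-1) = Set.Icc (-1:ℝ) 1 := by
      rw [Set.uIcc_comm]; exact hIcc
    have := intervalIntegral.continuousOn_primitive_interval (μ := volume) (a := (1:ℝ))
      (b := (-1:ℝ)) (f := f2) (by rw [hIcc']; exact hc2.integrableOn_Icc)
    rw [hIcc'] at this
    have hBeq : B = fun x => -(∫ y in (1:ℝ)..x, f2 y) := by
      funext z
      rw [hB_def, intervalIntegral.integral_symm, neg_neg]
    rw [hBeq]
    exact this.neg
  have hGcont : ContinuousOn G (Set.Icc (-1:ℝ) 1) :=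
    ((Real.continuous_exp.comp continuous_neg).continuousOn.mul hAcont).add
      (Real.continuous_exp.continuousOn.mul hBcont)
  have hDcont : ContinuousOn D (Set.Icc (-1:ℝ) 1) :=
    (((Real.continuous_exp.comp continuous_neg).continuousOn.mul hAcont).neg).add
      (Real.continuous_exp.continuousOn.mul hBcont)
  -- Step 4 : bounds
  have hAbd : ∀ x ∈ Set.Icc (-1:ℝ) 1, |A x| ≤ M * Real.exp x := by
    intro x hx
    have hx1 : (-1:ℝ) ≤ x := hx.1
    have hbd : ∀ᵐ t ∂(volume.restrict (Set.uIoc (-1:ℝ) x)), ‖f1 t‖ ≤ M * Real.exp t := by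
      rw [Set.uIoc_of_le hx1]
      refine (ae_restrict_mem measurableSet_Ioc).mono fun t ht => ?_
      have htI : t ∈ Set.Icc (-1:ℝ) 1 := ⟨le_of_lt ht.1, le_trans ht.2 hx.2⟩
      rw [hf1_def]
      calc ‖Real.exp t * h t‖ = Real.exp t * |h t| := by
            rw [norm_mul, Real.norm_eq_abs, Real.norm_eq_abs, abs_of_pos (Real.exp_pos t)]
        _ ≤ Real.exp t * M := by
            exact mul_le_mul_of_nonneg_left (hMb t htI) (Real.exp_pos t).le
        _ = M * Real.exp t := by ring
    have hgi : IntervalIntegrable (fun t => M * Real.exp t) volume (-1) x :=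
      (continuous_const.mul Real.continuous_exp).intervalIntegrable _ _
    have := intervalIntegral.norm_integral_le_of_norm_le hx.1 (by rw [Set.uIoc_of_le hx.1] at hbd; exact (ae_restrict_iff' measurableSet_Ioc).1 hbd) hgi
    rw [Real.norm_eq_abs] at this
    refine le_trans this ?_
    rw [intervalIntegral.integral_const_mul, integral_exp]
    have hexp : Real.exp (-1) ≤ Real.exp x := Real.exp_le_exp.2 (by linarith)
    nlinarith [Real.exp_pos (-1:ℝ)]
  have hBbd : ∀ x ∈ Set.Icc (-1:ℝ) 1, |B x| ≤ M * Real.exp (-x) := by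
    intro x hx
    have hx2 : x ≤ 1 := hx.2
    have hbd : ∀ᵐ t ∂(volume.restrict (Set.uIoc x (1:ℝ))), ‖f2 t‖ ≤ M * Real.exp (-t) := by
      rw [Set.uIoc_of_le hx2]
      refine (ae_restrict_mem measurableSet_Ioc).mono fun t ht => ?_
      have htI : t ∈ Set.Icc (-1:ℝ) 1 := ⟨le_trans hx.1 (le_of_lt ht.1), ht.2⟩
      rw [hf2_def]
      calc ‖Real.exp (-t) * h t‖ = Real.exp (-t) * |h t| := by
            rw [norm_mul, Real.norm_eq_abs, Real.norm_eq_abs, abs_of_pos (Real.exp_pos _)]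
        _ ≤ Real.exp (-t) * M :=
            mul_le_mul_of_nonneg_left (hMb t htI) (Real.exp_pos _).le
        _ = M * Real.exp (-t) := by ring
    have hgi : IntervalIntegrable (fun t => M * Real.exp (-t)) volume x 1 :=
      (continuous_const.mul (Real.continuous_exp.comp continuous_neg)).intervalIntegrable _ _
    have := intervalIntegral.norm_integral_le_of_norm_le hx2 (by rw [Set.uIoc_of_le hx2] at hbd; exact (ae_restrict_iff' measurableSet_Ioc).1 hbd) hgi
    rw [Real.norm_eq_abs] at this
    refine le_trans this ?_
    have hcomp : (∫ t in x..(1:ℝ), Real.exp (-t)) = Real.exp (-x) - Real.exp (-1) := by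
      rw [show (∫ t in x..(1:ℝ), Real.exp (-t)) = ∫ t in (-1:ℝ)..(-x), Real.exp t from ?_]
      · rw [integral_exp]
      · rw [← intervalIntegral.integral_comp_neg (fun t => Real.exp t)]
    rw [intervalIntegral.integral_const_mul, hcomp]
    have hexp : Real.exp (-1) ≤ Real.exp (-x) := Real.exp_le_exp.2 (by linarith)
    nlinarith [Real.exp_pos (-1:ℝ)]
  have hbound : ∀ x ∈ Set.Icc (-1:ℝ) 1, G x ^ 2 + D x ^ 2 ≤ 8 * M ^ 2 := by
    intro x hx
    have hA := hAbd x hx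
    have hB := hBbd x hx
    have e1 : Real.exp (-x) * Real.exp x = 1 := by rw [← Real.exp_add]; simp
    have hep := Real.exp_pos x
    have henp := Real.exp_pos (-x)
    have hGb : |G x| ≤ 2 * M := by
      rw [hG_def]
      calc |Real.exp (-x) * A x + Real.exp x * B x|
          ≤ |Real.exp (-x) * A x| + |Real.exp x * B x| := abs_add_le _ _
        _ = Real.exp (-x) * |A x| + Real.exp x * |B x| := by
            rw [abs_mul, abs_mul, abs_of_pos henp, abs_of_pos hep]
        _ ≤ 2 * M := by nlinarith [abs_nonneg (A x), abs_nonneg (B x)]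
    have hDb : |D x| ≤ 2 * M := by
      rw [hD_def]
      calc |-(Real.exp (-x) * A x) + Real.exp x * B x|
          ≤ |-(Real.exp (-x) * A x)| + |Real.exp x * B x| := abs_add_le _ _
        _ = Real.exp (-x) * |A x| + Real.exp x * |B x| := by
            rw [abs_neg, abs_mul, abs_mul, abs_of_pos henp, abs_of_pos hep]
        _ ≤ 2 * M := by nlinarith [abs_nonneg (A x), abs_nonneg (B x)]
    nlinarith [sq_abs (G x), sq_abs (D x), abs_nonneg (G x), abs_nonneg (D x)]
  -- Step 5 : the integrals agree a.e.
  have hne : ∀ᵐ x : ℝ, x ≠ (1:ℝ) := by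
    have h1 : volume ({(1:ℝ)} : Set ℝ) = 0 := measure_singleton 1
    rw [ae_iff]
    convert h1 using 2
    ext x
    simp
  have hcongr : (∫ x in (-1:ℝ)..1, ((F x)^2 + (deriv F x)^2))
      = ∫ x in (-1:ℝ)..1, (G x ^ 2 + D x ^ 2) := by
    refine intervalIntegral.integral_congr_ae ?_
    refine hne.mono fun x hx1 hx => ?_
    rw [Set.uIoc_of_le (by norm_num : (-1:ℝ) ≤ 1)] at hx
    have hxo : x ∈ Set.Ioo (-1:ℝ) 1 := ⟨hx.1, lt_of_le_of_ne hx.2 hx1⟩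
    rw [hFG x (Set.Ioo_subset_Icc_self hxo), hderiv x hxo]
  rw [hcongr]
  have hint : IntervalIntegrable (fun x => G x ^ 2 + D x ^ 2) volume (-1) 1 := by
    refine ContinuousOn.intervalIntegrable ?_
    rw [hIcc]
    exact (hGcont.pow 2).add (hDcont.pow 2)
  have hconst : IntervalIntegrable (fun _ : ℝ => 8 * M ^ 2) volume (-1) 1 :=
    intervalIntegrable_const
  have hmono := intervalIntegral.integral_mono_on (by norm_num : (-1:ℝ) ≤ 1) hint hconst
    (fun x hx => hbound x hx)
  refine le_trans hmono ?_
  rw [intervalIntegral.integral_const]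
  simp
  ring_nf
  linarith
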